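/- Let X be a topological space and F : X × [0,1] → X a homotopy with F₀ = id_X. Let E = {(α, s) ∈ P(X) × [0,1] : α(1) = F_s(α(0))}, where P(X) is the space of paths [0,1] → X with the compact-open topology. Then the map E → LX × [0,1] sending (α, s) to (the loop obtained by concatenating α with the reverse of the path t ↦ F_{ts}(α(0)), s) is a homotopy equivalence, and hence E is homotopy equivalent to the free loop space LX. -/

import Mathlib

/-!
Statement 4: for a homotopy `F : X × [0,1] → X` with `F₀ = id`, the twisted
path space `E = {(α, s) | α(1) = F_s(α(0))}` is homotopy equivalent to the free
loop space `LX`, via the map sending `(α, s)` to the loop obtained by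
concatenating `α` with the reverse of the path `t ↦ F_{ts}(α(0))`.

Paths are modelled as continuous maps `ℝ → X` (with the parameter interval
`[0,1]`), so that concatenation formulas can be written without subtype fuss;
`LX` is the space of such paths with equal endpoints at `0` and `1`.
-/

/-- Free loops on `X`: continuous `γ : ℝ → X` with `γ 0 = γ 1`. -/
def RLoop (X : Type*) [TopologicalSpace X] : Type _ := {γ : C(ℝ, X) // γ 0 = γ 1}

instance (X : Type*) [TopologicalSpace X] : TopologicalSpace (RLoop X) :=
  inferInstanceAs (TopologicalSpace {γ : C(ℝ, X) // γ 0 = γ 1})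

/-- The twisted loop space of a homotopy `F`: pairs `(α, s)` with `s ∈ [0,1]`
and `α(1) = F(α(0), s)`. -/
def TwistedLoops (X : Type*) [TopologicalSpace X] (F : C(X × ℝ, X)) : Type _ :=
  {p : C(ℝ, X) × ℝ // p.2 ∈ Set.Icc (0 : ℝ) 1 ∧ p.1 1 = F (p.1 0, p.2)}

instance (X : Type*) [TopologicalSpace X] (F : C(X × ℝ, X)) :
    TopologicalSpace (TwistedLoops X F) :=
  inferInstanceAs (TopologicalSpace
    {p : C(ℝ, X) × ℝ // p.2 ∈ Set.Icc (0 : ℝ) 1 ∧ p.1 1 = F (p.1 0, p.2)})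

namespace TLProof

open Set ContinuousMap

variable {X : Type*} [TopologicalSpace X]

noncomputable def clampMap : C(ℝ, ℝ) :=
  ⟨fun t => max 0 (min t 1), by fun_prop⟩

lemma clamp_zero : clampMap 0 = 0 := by norm_num [clampMap]
lemma clamp_one : clampMap 1 = 1 := by norm_num [clampMap]
lemma clamp_nonneg (t : ℝ) : 0 ≤ clampMap t := le_max_left _ _
lemma clamp_le_one (t : ℝ) : clampMap t ≤ 1 := max_le (by norm_num) (min_le_right _ _)

noncomputable def sig (t : ℝ) : ℝ := if t ≤ 1/2 then 4*t else 3-2*t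

lemma continuous_sig : Continuous sig := by
  refine Continuous.if_le (by fun_prop) (by fun_prop) continuous_id continuous_const ?_
  intro x hx; rw [hx]; norm_num

lemma sig_zero : sig 0 = 0 := by norm_num [sig]
lemma sig_one : sig 1 = 1 := by norm_num [sig]

lemma cont_eval {Y : Type*} [TopologicalSpace Y] {g : Y → C(ℝ, X)} {h : Y → ℝ}
    (hg : Continuous g) (hh : Continuous h) : Continuous fun y => g y (h y) :=
  ContinuousEval.continuous_eval.comp (hg.prodMk hh)

variable (F : C(X × ℝ, X))

lemma cont_TLpath : Continuous fun e : TwistedLoops X F => e.1.1 :=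
  continuous_fst.comp continuous_subtype_val

lemma cont_TLs : Continuous fun e : TwistedLoops X F => e.1.2 :=
  continuous_snd.comp continuous_subtype_val

lemma cont_RLval : Continuous fun γ : RLoop X => γ.1 := continuous_subtype_val

variable {F}

/-- The underlying two-variable map of `Ψ`. -/
noncomputable def psiBig (hF0 : ∀ x : X, F (x, 0) = x) :
    C((RLoop X × unitInterval) × ℝ, X) :=
  ⟨fun p => if p.2 ≤ 1/2 then p.1.1.1 (2*p.2)
            else F (p.1.1.1 0, (2*p.2-1)*(p.1.2 : ℝ)),
   by
     have hval : Continuous fun p : (RLoop X × unitInterval) × ℝ => p.1.1.1 :=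
       cont_RLval.comp (continuous_fst.comp continuous_fst)
     have hcoe : Continuous fun p : (RLoop X × unitInterval) × ℝ => (p.1.2 : ℝ) :=
       continuous_subtype_val.comp (continuous_snd.comp continuous_fst)
     refine Continuous.if_le ?_ ?_ continuous_snd continuous_const ?_
     · exact cont_eval hval (continuous_const.mul continuous_snd)
     · exact F.continuous.comp ((cont_eval hval continuous_const).prodMk
         ((((continuous_const.mul continuous_snd).sub continuous_const).mul hcoe)))
     · intro p hp
       rw [hp]
       norm_num
       rw [hF0]
       exact p.1.1.2.symm⟩

noncomputable def Psi (hF0 : ∀ x : X, F (x, 0) = x) :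
    C(RLoop X × unitInterval, TwistedLoops X F) :=
  ⟨fun y => ⟨((psiBig hF0).curry y, (y.2 : ℝ)),
    ⟨y.2.2, by
      show psiBig hF0 (y, 1) = F (psiBig hF0 (y, 0), (y.2:ℝ))
      simp only [psiBig, ContinuousMap.coe_mk]
      norm_num⟩⟩,
   Continuous.subtype_mk
     (((psiBig hF0).curry.continuous).prodMk
       (continuous_subtype_val.comp continuous_snd)) _⟩

lemma Psi_path (hF0 : ∀ x : X, F (x, 0) = x) (y : RLoop X × unitInterval) (t : ℝ) :
    ((Psi hF0 y).1.1 : C(ℝ,X)) t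
      = if t ≤ 1/2 then y.1.1 (2*t) else F (y.1.1 0, (2*t-1)*(y.2 : ℝ)) := rfl

lemma Psi_s (hF0 : ∀ x : X, F (x, 0) = x) (y : RLoop X × unitInterval) :
    (Psi hF0 y).1.2 = (y.2 : ℝ) := rfl

variable (F)

/-! ### Clamping on `TwistedLoops` -/

noncomputable def clampBigTL : C(TwistedLoops X F × ℝ, X) :=
  ⟨fun p => p.1.1.1 (clampMap p.2),
   cont_eval ((cont_TLpath F).comp continuous_fst) (clampMap.continuous.comp continuous_snd)⟩

noncomputable def clampTL : C(TwistedLoops X F, TwistedLoops X F) :=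
  ⟨fun e => ⟨((clampBigTL F).curry e, e.1.2),
    ⟨e.2.1, by
      show e.1.1 (clampMap 1) = F (e.1.1 (clampMap 0), e.1.2)
      rw [clamp_one, clamp_zero]; exact e.2.2⟩⟩,
   Continuous.subtype_mk ((clampBigTL F).curry.continuous.prodMk (cont_TLs F)) _⟩

noncomputable def linBigTL : C((unitInterval × TwistedLoops X F) × ℝ, X) :=
  ⟨fun p => p.1.2.1.1 ((1-(p.1.1:ℝ))*p.2 + (p.1.1:ℝ)*clampMap p.2),
   by
     have hu : Continuous fun p : (unitInterval × TwistedLoops X F) × ℝ => (p.1.1 : ℝ) :=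
       continuous_subtype_val.comp (continuous_fst.comp continuous_fst)
     exact cont_eval ((cont_TLpath F).comp (continuous_snd.comp continuous_fst))
       ((((continuous_const.sub hu).mul continuous_snd).add
         (hu.mul (clampMap.continuous.comp continuous_snd))))⟩

noncomputable def homIdClampTL :
    ContinuousMap.Homotopy (ContinuousMap.id (TwistedLoops X F)) (clampTL F) where
  toContinuousMap := ⟨fun q => ⟨((linBigTL F).curry q, q.2.1.2),
    ⟨q.2.2.1, by
      show q.2.1.1 ((1-(q.1:ℝ))*1 + (q.1:ℝ)*clampMap 1)
         = F (q.2.1.1 ((1-(q.1:ℝ))*0 + (q.1:ℝ)*clampMap 0), q.2.1.2)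
      rw [clamp_one, clamp_zero]
      have h1 : (1-(q.1:ℝ))*1 + (q.1:ℝ)*1 = 1 := by ring
      have h0 : (1-(q.1:ℝ))*0 + (q.1:ℝ)*0 = 0 := by ring
      rw [h1, h0]
      exact q.2.2.2⟩⟩,
    Continuous.subtype_mk ((linBigTL F).curry.continuous.prodMk
      ((cont_TLs F).comp continuous_snd)) _⟩
  map_zero_left e := by
    apply Subtype.ext
    apply Prod.ext
    · apply ContinuousMap.ext; intro t
      show e.1.1 ((1-((0:unitInterval):ℝ))*t + ((0:unitInterval):ℝ)*clampMap t)
         = ((ContinuousMap.id (TwistedLoops X F)) e).1.1 t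
      have hz : ((0:unitInterval):ℝ) = 0 := by simp
      rw [hz]
      show e.1.1 _ = e.1.1 t
      congr 1; ring
    · rfl
  map_one_left e := by
    apply Subtype.ext
    apply Prod.ext
    · apply ContinuousMap.ext; intro t
      show e.1.1 ((1-((1:unitInterval):ℝ))*t + ((1:unitInterval):ℝ)*clampMap t)
         = e.1.1 (clampMap t)
      have hz : ((1:unitInterval):ℝ) = 1 := by simp
      rw [hz]
      congr 1; ring
    · rfl

/-! ### Clamping on `RLoop × I` -/

noncomputable def clampBigRL0 : C(RLoop X × ℝ, X) :=
  ⟨fun p => p.1.1 (clampMap p.2),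
   cont_eval (cont_RLval.comp continuous_fst) (clampMap.continuous.comp continuous_snd)⟩

lemma clampRL_mem (γ : RLoop X) :
    ((clampBigRL0.curry γ : C(ℝ, X))) 0 = (clampBigRL0.curry γ : C(ℝ, X)) 1 := by
  show γ.1 (clampMap 0) = γ.1 (clampMap 1)
  rw [clamp_zero, clamp_one]; exact γ.2

noncomputable def clampRLloop : C(RLoop X, RLoop X) :=
  ⟨fun γ => ⟨clampBigRL0.curry γ, clampRL_mem γ⟩,
   Continuous.subtype_mk clampBigRL0.curry.continuous _⟩

noncomputable def clampRL : C(RLoop X × unitInterval, RLoop X × unitInterval) :=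
  clampRLloop.prodMap (ContinuousMap.id _)

noncomputable def linBigRL : C((unitInterval × (RLoop X × unitInterval)) × ℝ, X) :=
  ⟨fun p => p.1.2.1.1 ((1-(p.1.1:ℝ))*p.2 + (p.1.1:ℝ)*clampMap p.2),
   by
     have hu : Continuous fun p : (unitInterval × (RLoop X × unitInterval)) × ℝ => (p.1.1 : ℝ) :=
       continuous_subtype_val.comp (continuous_fst.comp continuous_fst)
     exact cont_eval (cont_RLval.comp ((continuous_fst.comp continuous_snd).comp continuous_fst))
       ((((continuous_const.sub hu).mul continuous_snd).add
         (hu.mul (clampMap.continuous.comp continuous_snd))))⟩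

lemma linRL_mem (q : unitInterval × (RLoop X × unitInterval)) :
    (linBigRL.curry q : C(ℝ, X)) 0 = (linBigRL.curry q : C(ℝ, X)) 1 := by
  show q.2.1.1 ((1-(q.1:ℝ))*0 + (q.1:ℝ)*clampMap 0)
     = q.2.1.1 ((1-(q.1:ℝ))*1 + (q.1:ℝ)*clampMap 1)
  rw [clamp_zero, clamp_one]
  have h1 : (1-(q.1:ℝ))*1 + (q.1:ℝ)*1 = 1 := by ring
  have h0 : (1-(q.1:ℝ))*0 + (q.1:ℝ)*0 = 0 := by ring
  rw [h1, h0]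
  exact q.2.1.2

noncomputable def homIdClampRL :
    ContinuousMap.Homotopy (ContinuousMap.id (RLoop X × unitInterval)) clampRL where
  toContinuousMap := ⟨fun q => (⟨linBigRL.curry q, linRL_mem q⟩, q.2.2),
    (Continuous.subtype_mk linBigRL.curry.continuous _).prodMk
      (continuous_snd.comp continuous_snd)⟩
  map_zero_left y := by
    apply Prod.ext
    · apply Subtype.ext
      apply ContinuousMap.ext; intro t
      show y.1.1 ((1-((0:unitInterval):ℝ))*t + ((0:unitInterval):ℝ)*clampMap t) = y.1.1 t
      have hz : ((0:unitInterval):ℝ) = 0 := by simp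
      rw [hz]
      congr 1; ring
    · rfl
  map_one_left y := by
    apply Prod.ext
    · apply Subtype.ext
      apply ContinuousMap.ext; intro t
      show y.1.1 ((1-((1:unitInterval):ℝ))*t + ((1:unitInterval):ℝ)*clampMap t)
         = y.1.1 (clampMap t)
      have hz : ((1:unitInterval):ℝ) = 1 := by simp
      rw [hz]
      congr 1; ring
    · rfl

/-! ### Reparametrization -/

noncomputable def rpar (u t : ℝ) : ℝ := (1-u)*sig (clampMap t) + u*clampMap t

lemma continuous_rpar {Y : Type*} [TopologicalSpace Y] {f g : Y → ℝ}
    (hf : Continuous f) (hg : Continuous g) : Continuous fun y => rpar (f y) (g y) := by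
  unfold rpar
  have h1 : Continuous fun y => clampMap (g y) := clampMap.continuous.comp hg
  exact ((continuous_const.sub hf).mul (continuous_sig.comp h1)).add (hf.mul h1)

lemma rpar_zero (u : ℝ) : rpar u 0 = 0 := by rw [rpar, clamp_zero, sig_zero]; ring
lemma rpar_one (u : ℝ) : rpar u 1 = 1 := by rw [rpar, clamp_one, sig_one]; ring
lemma rpar_u0 (t : ℝ) : rpar 0 t = sig (clampMap t) := by rw [rpar]; ring
lemma rpar_u1 (t : ℝ) : rpar 1 t = clampMap t := by rw [rpar]; ring

/-! ### Stage-2 homotopy on `TwistedLoops` -/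

noncomputable def bigA : C((unitInterval × TwistedLoops X F) × ℝ, X) :=
  ⟨fun p => if rpar (p.1.1:ℝ) p.2 ≤ 1
      then p.1.2.1.1 (rpar (p.1.1:ℝ) p.2)
      else F (p.1.2.1.1 0, (2 - rpar (p.1.1:ℝ) p.2) * p.1.2.1.2),
   by
     have hu : Continuous fun p : (unitInterval × TwistedLoops X F) × ℝ => (p.1.1 : ℝ) :=
       continuous_subtype_val.comp (continuous_fst.comp continuous_fst)
     have hr : Continuous fun p : (unitInterval × TwistedLoops X F) × ℝ => rpar (p.1.1:ℝ) p.2 :=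
       continuous_rpar hu continuous_snd
     have hpath : Continuous fun p : (unitInterval × TwistedLoops X F) × ℝ => p.1.2.1.1 :=
       (cont_TLpath F).comp (continuous_snd.comp continuous_fst)
     have hs : Continuous fun p : (unitInterval × TwistedLoops X F) × ℝ => p.1.2.1.2 :=
       (cont_TLs F).comp (continuous_snd.comp continuous_fst)
     refine Continuous.if_le (cont_eval hpath hr) ?_ hr continuous_const ?_
     · exact F.continuous.comp ((cont_eval hpath continuous_const).prodMk
         ((continuous_const.sub hr).mul hs))
     · intro p hp
       rw [hp]
       have h : (2 - (1:ℝ)) * p.1.2.1.2 = p.1.2.1.2 := by ring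
       rw [h]
       exact p.1.2.2.2⟩

lemma bigA_mem (q : unitInterval × TwistedLoops X F) :
    (bigA F).curry q 1 = F ((bigA F).curry q 0, q.2.1.2) := by
  show (if rpar (q.1:ℝ) 1 ≤ 1 then q.2.1.1 (rpar (q.1:ℝ) 1)
        else F (q.2.1.1 0, (2 - rpar (q.1:ℝ) 1) * q.2.1.2))
     = F ((if rpar (q.1:ℝ) 0 ≤ 1 then q.2.1.1 (rpar (q.1:ℝ) 0)
        else F (q.2.1.1 0, (2 - rpar (q.1:ℝ) 0) * q.2.1.2)), q.2.1.2)
  rw [rpar_one, rpar_zero, if_pos le_rfl, if_pos (by norm_num : (0:ℝ) ≤ 1)]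
  exact q.2.2.2

/-- The key pointwise computation on the twisted-loops side. -/
lemma keyTL (α : C(ℝ, X)) (s : ℝ) (hα : α 1 = F (α 0, s)) (t' : ℝ)
    (ht0 : 0 ≤ t') (ht1 : t' ≤ 1) :
    (if sig t' ≤ 1 then α (sig t') else F (α 0, (2 - sig t') * s))
    = if t' ≤ 1/2
        then (if 2*t' ≤ 1/2 then α (2*(2*t')) else F (α 0, (2 - 2*(2*t')) * s))
        else F ((if (0:ℝ) ≤ 1/2 then α (2*0) else F (α 0, (2-2*0) * s)),
                (2*t' - 1) * s) := by
  rcases le_or_gt t' (1/2) with h | h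
  · rw [if_pos h]
    have hs2 : sig t' = 4*t' := if_pos h
    rcases le_or_gt (2*t') (1/2) with h2 | h2
    · rw [if_pos h2, hs2, if_pos (by linarith : 4*t' ≤ 1)]
      congr 1; ring
    · rw [if_neg (not_le.mpr h2), hs2,
        if_neg (not_le.mpr (by linarith : (1:ℝ) < 4*t'))]
      have harg : (2 - 4*t') * s = (2 - 2*(2*t')) * s := by ring
      rw [harg]
  · rw [if_neg (not_le.mpr h), if_pos (by norm_num : (0:ℝ) ≤ 1/2)]
    have hsig : sig t' = 3 - 2*t' := if_neg (not_le.mpr h)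
    have h20 : (2:ℝ)*0 = 0 := by norm_num
    rw [h20]
    rcases eq_or_lt_of_le ht1 with h1 | h1
    · subst h1
      rw [hsig]
      norm_num
      exact hα
    · rw [hsig, if_neg (not_le.mpr (by linarith : (1:ℝ) < 3-2*t'))]
      have harg : (2 - (3-2*t')) * s = (2*t' - 1) * s := by ring
      rw [harg]

lemma stage2TL (hF0 : ∀ x : X, F (x, 0) = x)
    (Φ : C(TwistedLoops X F, RLoop X × unitInterval))
    (hΦ : ∀ e : TwistedLoops X F,
      ((Φ e).2 : ℝ) = e.1.2 ∧
      ∀ t : ℝ, ((Φ e).1.1 : C(ℝ, X)) t =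
        if t ≤ 1 / 2 then e.1.1 (2 * t) else F (e.1.1 0, (2 - 2 * t) * e.1.2)) :
    ((clampTL F).comp ((Psi hF0).comp Φ)).Homotopic (clampTL F) := by
  refine ⟨ContinuousMap.Homotopy.mk
    (⟨fun q => ⟨((bigA F).curry q, q.2.1.2), ⟨q.2.2.1, bigA_mem F q⟩⟩,
      Continuous.subtype_mk ((bigA F).curry.continuous.prodMk
        ((cont_TLs F).comp continuous_snd)) _⟩) ?_ ?_⟩
  · intro e
    apply Subtype.ext
    apply Prod.ext
    · apply ContinuousMap.ext; intro t
      show (if rpar ((0:unitInterval):ℝ) t ≤ 1 then e.1.1 (rpar ((0:unitInterval):ℝ) t)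
            else F (e.1.1 0, (2 - rpar ((0:unitInterval):ℝ) t) * e.1.2))
        = if clampMap t ≤ 1/2 then ((Φ e).1.1 : C(ℝ, X)) (2*clampMap t)
          else F (((Φ e).1.1 : C(ℝ, X)) 0, (2*clampMap t - 1) * ((Φ e).2 : ℝ))
      rw [(hΦ e).2 (2*clampMap t), (hΦ e).2 0, (hΦ e).1]
      have hz : ((0:unitInterval):ℝ) = 0 := by simp
      rw [hz, rpar_u0]
      exact keyTL F e.1.1 e.1.2 e.2.2 (clampMap t) (clamp_nonneg t) (clamp_le_one t)
    · exact ((hΦ e).1).symm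
  · intro e
    apply Subtype.ext
    apply Prod.ext
    · apply ContinuousMap.ext; intro t
      show (if rpar ((1:unitInterval):ℝ) t ≤ 1 then e.1.1 (rpar ((1:unitInterval):ℝ) t)
            else F (e.1.1 0, (2 - rpar ((1:unitInterval):ℝ) t) * e.1.2))
        = e.1.1 (clampMap t)
      have hz : ((1:unitInterval):ℝ) = 1 := by simp
      rw [hz, rpar_u1, if_pos (clamp_le_one t)]
    · rfl

/-! ### Stage-2 homotopy on `RLoop × I` -/

variable {F}

noncomputable def bigB (hF0 : ∀ x : X, F (x, 0) = x) :
    C((unitInterval × (RLoop X × unitInterval)) × ℝ, X) :=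
  ⟨fun p => if rpar (p.1.1:ℝ) p.2 ≤ 1
      then p.1.2.1.1 (rpar (p.1.1:ℝ) p.2)
      else F (p.1.2.1.1 0, (rpar (p.1.1:ℝ) p.2 - 1) * (p.1.2.2:ℝ)),
   by
     have hu : Continuous fun p : (unitInterval × (RLoop X × unitInterval)) × ℝ => (p.1.1 : ℝ) :=
       continuous_subtype_val.comp (continuous_fst.comp continuous_fst)
     have hr : Continuous fun p : (unitInterval × (RLoop X × unitInterval)) × ℝ =>
         rpar (p.1.1:ℝ) p.2 := continuous_rpar hu continuous_snd
     have hpath : Continuous fun p : (unitInterval × (RLoop X × unitInterval)) × ℝ =>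
         p.1.2.1.1 := cont_RLval.comp ((continuous_fst.comp continuous_snd).comp continuous_fst)
     have hs : Continuous fun p : (unitInterval × (RLoop X × unitInterval)) × ℝ =>
         (p.1.2.2 : ℝ) :=
       continuous_subtype_val.comp ((continuous_snd.comp continuous_snd).comp continuous_fst)
     refine Continuous.if_le (cont_eval hpath hr) ?_ hr continuous_const ?_
     · exact F.continuous.comp ((cont_eval hpath continuous_const).prodMk
         ((hr.sub continuous_const).mul hs))
     · intro p hp
       rw [hp]
       have h : ((1:ℝ) - 1) * (p.1.2.2:ℝ) = 0 := by ring
       rw [h, hF0]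
       exact p.1.2.1.2.symm⟩

lemma bigB_mem (hF0 : ∀ x : X, F (x, 0) = x)
    (q : unitInterval × (RLoop X × unitInterval)) :
    ((bigB hF0).curry q : C(ℝ, X)) 0 = ((bigB hF0).curry q : C(ℝ, X)) 1 := by
  show (if rpar (q.1:ℝ) 0 ≤ 1 then q.2.1.1 (rpar (q.1:ℝ) 0)
        else F (q.2.1.1 0, (rpar (q.1:ℝ) 0 - 1) * (q.2.2:ℝ)))
     = (if rpar (q.1:ℝ) 1 ≤ 1 then q.2.1.1 (rpar (q.1:ℝ) 1)
        else F (q.2.1.1 0, (rpar (q.1:ℝ) 1 - 1) * (q.2.2:ℝ)))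
  rw [rpar_one, rpar_zero, if_pos le_rfl, if_pos (by norm_num : (0:ℝ) ≤ 1)]
  exact q.2.1.2

/-- The key pointwise computation on the free-loop side. -/
lemma keyRL (hF0 : ∀ x : X, F (x, 0) = x) (δ : C(ℝ, X)) (s : ℝ) (hδ : δ 0 = δ 1)
    (t' : ℝ) (ht0 : 0 ≤ t') (ht1 : t' ≤ 1) :
    (if sig t' ≤ 1 then δ (sig t') else F (δ 0, (sig t' - 1) * s))
    = if t' ≤ 1/2
        then (if 2*t' ≤ 1/2 then δ (2*(2*t')) else F (δ 0, (2*(2*t') - 1) * s))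
        else F ((if (0:ℝ) ≤ 1/2 then δ (2*0) else F (δ 0, (2*0 - 1) * s)),
                (2 - 2*t') * s) := by
  rcases le_or_gt t' (1/2) with h | h
  · rw [if_pos h]
    have hs2 : sig t' = 4*t' := if_pos h
    rcases le_or_gt (2*t') (1/2) with h2 | h2
    · rw [if_pos h2, hs2, if_pos (by linarith : 4*t' ≤ 1)]
      congr 1; ring
    · rw [if_neg (not_le.mpr h2), hs2,
        if_neg (not_le.mpr (by linarith : (1:ℝ) < 4*t'))]
      have harg : (4*t' - 1) * s = (2*(2*t') - 1) * s := by ring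
      rw [harg]
  · rw [if_neg (not_le.mpr h), if_pos (by norm_num : (0:ℝ) ≤ 1/2)]
    have hsig : sig t' = 3 - 2*t' := if_neg (not_le.mpr h)
    have h20 : (2:ℝ)*0 = 0 := by norm_num
    rw [h20]
    rcases eq_or_lt_of_le ht1 with h1 | h1
    · subst h1
      rw [hsig]
      norm_num
      rw [hF0]
      exact hδ.symm
    · rw [hsig, if_neg (not_le.mpr (by linarith : (1:ℝ) < 3-2*t'))]
      have harg : (3 - 2*t' - 1) * s = (2 - 2*t') * s := by ring
      rw [harg]

lemma stage2RL (hF0 : ∀ x : X, F (x, 0) = x)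
    (Φ : C(TwistedLoops X F, RLoop X × unitInterval))
    (hΦ : ∀ e : TwistedLoops X F,
      ((Φ e).2 : ℝ) = e.1.2 ∧
      ∀ t : ℝ, ((Φ e).1.1 : C(ℝ, X)) t =
        if t ≤ 1 / 2 then e.1.1 (2 * t) else F (e.1.1 0, (2 - 2 * t) * e.1.2)) :
    (clampRL.comp (Φ.comp (Psi hF0))).Homotopic clampRL := by
  refine ⟨ContinuousMap.Homotopy.mk
    (⟨fun q => (⟨(bigB hF0).curry q, bigB_mem hF0 q⟩, q.2.2),
      (Continuous.subtype_mk (bigB hF0).curry.continuous _).prodMk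
        (continuous_snd.comp continuous_snd)⟩) ?_ ?_⟩
  · intro y
    apply Prod.ext
    · apply Subtype.ext
      apply ContinuousMap.ext; intro t
      show (if rpar ((0:unitInterval):ℝ) t ≤ 1 then y.1.1 (rpar ((0:unitInterval):ℝ) t)
            else F (y.1.1 0, (rpar ((0:unitInterval):ℝ) t - 1) * (y.2:ℝ)))
        = ((Φ (Psi hF0 y)).1.1 : C(ℝ, X)) (clampMap t)
      rw [(hΦ (Psi hF0 y)).2 (clampMap t)]
      rw [Psi_path hF0 y (2 * clampMap t), Psi_path hF0 y 0, Psi_s hF0 y]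
      have hz : ((0:unitInterval):ℝ) = 0 := by simp
      rw [hz, rpar_u0]
      exact keyRL hF0 y.1.1 (y.2:ℝ) y.1.2 (clampMap t) (clamp_nonneg t) (clamp_le_one t)
    · show y.2 = (Φ (Psi hF0 y)).2
      exact Subtype.ext ((hΦ (Psi hF0 y)).1).symm
  · intro y
    apply Prod.ext
    · apply Subtype.ext
      apply ContinuousMap.ext; intro t
      show (if rpar ((1:unitInterval):ℝ) t ≤ 1 then y.1.1 (rpar ((1:unitInterval):ℝ) t)
            else F (y.1.1 0, (rpar ((1:unitInterval):ℝ) t - 1) * (y.2:ℝ)))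
        = y.1.1 (clampMap t)
      have hz : ((1:unitInterval):ℝ) = 1 := by simp
      rw [hz, rpar_u1, if_pos (clamp_le_one t)]
    · rfl

/-! ### Assembly -/

lemma homPsiPhi (hF0 : ∀ x : X, F (x, 0) = x)
    (Φ : C(TwistedLoops X F, RLoop X × unitInterval))
    (hΦ : ∀ e : TwistedLoops X F,
      ((Φ e).2 : ℝ) = e.1.2 ∧
      ∀ t : ℝ, ((Φ e).1.1 : C(ℝ, X)) t =
        if t ≤ 1 / 2 then e.1.1 (2 * t) else F (e.1.1 0, (2 - 2 * t) * e.1.2)) :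
    ((Psi hF0).comp Φ).Homotopic (ContinuousMap.id _) := by
  have c1 : ((ContinuousMap.id (TwistedLoops X F)).comp ((Psi hF0).comp Φ)).Homotopic
      ((clampTL F).comp ((Psi hF0).comp Φ)) :=
    ContinuousMap.Homotopic.comp ⟨homIdClampTL F⟩ (ContinuousMap.Homotopic.refl _)
  rw [ContinuousMap.id_comp] at c1
  exact (c1.trans (stage2TL F hF0 Φ hΦ)).trans
    (ContinuousMap.Homotopic.symm ⟨homIdClampTL F⟩)

lemma homPhiPsi (hF0 : ∀ x : X, F (x, 0) = x)
    (Φ : C(TwistedLoops X F, RLoop X × unitInterval))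
    (hΦ : ∀ e : TwistedLoops X F,
      ((Φ e).2 : ℝ) = e.1.2 ∧
      ∀ t : ℝ, ((Φ e).1.1 : C(ℝ, X)) t =
        if t ≤ 1 / 2 then e.1.1 (2 * t) else F (e.1.1 0, (2 - 2 * t) * e.1.2)) :
    (Φ.comp (Psi hF0)).Homotopic (ContinuousMap.id _) := by
  have c1 : ((ContinuousMap.id (RLoop X × unitInterval)).comp (Φ.comp (Psi hF0))).Homotopic
      (clampRL.comp (Φ.comp (Psi hF0))) :=
    ContinuousMap.Homotopic.comp ⟨homIdClampRL⟩ (ContinuousMap.Homotopic.refl _)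
  rw [ContinuousMap.id_comp] at c1
  exact (c1.trans (stage2RL hF0 Φ hΦ)).trans
    (ContinuousMap.Homotopic.symm ⟨homIdClampRL⟩)

/-! ### `RLoop × I ≃ₕ RLoop` -/

noncomputable def incRL : C(RLoop X, RLoop X × unitInterval) :=
  ⟨fun γ => (γ, 0), continuous_id.prodMk continuous_const⟩

noncomputable def prodIequiv :
    ContinuousMap.HomotopyEquiv (RLoop X × unitInterval) (RLoop X) where
  toFun := ContinuousMap.fst
  invFun := incRL
  left_inv := by
    refine ⟨ContinuousMap.Homotopy.mk
      (⟨fun q => (q.2.1, ⟨(q.1:ℝ)*(q.2.2:ℝ), unitInterval.mul_mem q.1.2 q.2.2.2⟩),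
        (continuous_fst.comp continuous_snd).prodMk
          (Continuous.subtype_mk ((continuous_subtype_val.comp continuous_fst).mul
            (continuous_subtype_val.comp (continuous_snd.comp continuous_snd))) _)⟩) ?_ ?_⟩
    · intro y
      apply Prod.ext
      · rfl
      · apply Subtype.ext
        show ((0:unitInterval):ℝ)*((y.2:unitInterval):ℝ) = ((0:unitInterval):ℝ)
        simp
    · intro y
      apply Prod.ext
      · rfl
      · apply Subtype.ext
        show ((1:unitInterval):ℝ)*((y.2:unitInterval):ℝ) = ((y.2:unitInterval):ℝ)
        simp
  right_inv := by
    have h : (ContinuousMap.fst).comp (incRL (X := X)) = ContinuousMap.id (RLoop X) :=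
      ContinuousMap.ext fun _ => rfl
    rw [h]

end TLProof

theorem twisted_loops_homotopyEquiv_loops
    (X : Type*) [TopologicalSpace X]
    (F : C(X × ℝ, X)) (hF0 : ∀ x : X, F (x, 0) = x)
    (Φ : C(TwistedLoops X F, RLoop X × unitInterval))
    -- `Φ` sends `(α, s)` to `(α ⋆ (t ↦ F_{ts}(α 0))⁻¹, s)`:
    (hΦ : ∀ e : TwistedLoops X F,
      ((Φ e).2 : ℝ) = e.1.2 ∧
      ∀ t : ℝ, ((Φ e).1.1 : C(ℝ, X)) t =
        if t ≤ 1 / 2 then e.1.1 (2 * t) else F (e.1.1 0, (2 - 2 * t) * e.1.2)) :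
    (∃ Ψ : C(RLoop X × unitInterval, TwistedLoops X F),
      (Φ.comp Ψ).Homotopic (ContinuousMap.id _) ∧
      (Ψ.comp Φ).Homotopic (ContinuousMap.id _)) ∧
    Nonempty (ContinuousMap.HomotopyEquiv (TwistedLoops X F) (RLoop X)) := by
  have h1 := TLProof.homPhiPsi hF0 Φ hΦ
  have h2 := TLProof.homPsiPhi hF0 Φ hΦ
  exact ⟨⟨TLProof.Psi hF0, h1, h2⟩,
    ⟨(ContinuousMap.HomotopyEquiv.mk Φ (TLProof.Psi hF0) h2 h1).trans TLProof.prodIequiv⟩⟩
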